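/- Suppose A and B are vertex-disjoint complete balanced bipartite graphs with k(A) ≥ k(B) ≥ 1, and A⁺ and B⁻ are vertex-disjoint complete balanced bipartite graphs with k(A⁺) = k(A) + 1 and k(B⁻) = k(B) − 1. Then k(A⁺ ⊔ B⁻) = k(A ⊔ B) and e(A⁺ ⊔ B⁻) ≥ e(A ⊔ B). -/

import Mathlib

noncomputable section

/-- A bipartite graph: two disjoint finite vertex sets `L`, `R`
and a set of edges `E ⊆ L × R`. -/
structure BipGraph (V : Type) [DecidableEq V] where
  L : Finset V
  R : Finset V
  disj : Disjoint L R
  E : Finset (V × V)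
  E_sub : E ⊆ L ×ˢ R

namespace BipGraph

variable {V : Type} [DecidableEq V]

/-- the vertex set -/
def verts (A : BipGraph V) : Finset V := A.L ∪ A.R

/-- `v A` is the number of vertices of `A` -/
def v (A : BipGraph V) : ℕ := A.verts.card

/-- `e A` is the number of edges of `A` -/
def e (A : BipGraph V) : ℕ := A.E.card

/-- the underlying simple graph on the vertex set of `A` -/
def graph (A : BipGraph V) : SimpleGraph {x : V // x ∈ A.verts} where
  Adj x y := (x.1, y.1) ∈ A.E ∨ (y.1, x.1) ∈ A.E
  symm := by
    constructor
    intro x y h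
    exact h.symm
  loopless := by
    constructor
    intro x h
    have hx : (x.1, x.1) ∈ A.E := by rcases h with h | h <;> exact h
    have hmem := A.E_sub hx
    rw [Finset.mem_product] at hmem
    exact Finset.disjoint_left.mp A.disj hmem.1 hmem.2

/-- `CC A` is the number of connected components of `A` (isolated vertices count). -/
def CC (A : BipGraph V) : ℕ := Nat.card A.graph.ConnectedComponent

/-- `k A = v A - CC A` -/
def k (A : BipGraph V) : ℕ := A.v - A.CC

/-- `A` is complete if every left-right pair is an edge. -/
def Complete (A : BipGraph V) : Prop := A.E = A.L ×ˢ A.R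

/-- `A` is balanced if its parts differ in size by at most one. -/
def Balanced (A : BipGraph V) : Prop := ((A.L.card : ℤ) - (A.R.card : ℤ)).natAbs ≤ 1

/-- `A` is null if it has no edges. -/
def Null (A : BipGraph V) : Prop := A.E = ∅

/-- the induced subgraph of `A` on a set `S` of vertices: the vertices of `A`
belonging to `S`, together with all edges of `A` between them. -/
def induce (A : BipGraph V) (S : Finset V) : BipGraph V where
  L := A.L ∩ S
  R := A.R ∩ S
  disj := A.disj.mono Finset.inter_subset_left Finset.inter_subset_left
  E := A.E.filter (fun p => p.1 ∈ S ∧ p.2 ∈ S)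
  E_sub := by
    intro p hp
    rw [Finset.mem_filter] at hp
    have hmem := A.E_sub hp.1
    rw [Finset.mem_product] at hmem ⊢
    exact ⟨Finset.mem_inter.mpr ⟨hmem.1, hp.2.1⟩, Finset.mem_inter.mpr ⟨hmem.2, hp.2.2⟩⟩

/-- the degree of a vertex: the number of edges incident to it -/
def deg (A : BipGraph V) (x : V) : ℕ :=
  (A.E.filter (fun p => p.1 = x ∨ p.2 = x)).card

/-- `A` is almost `ℓ`-complete: the two parts have sizes within `0.01 * ℓ` of `ℓ`,
and every vertex has degree at least `0.9 * ℓ`. -/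
def AlmostComplete (ℓ : ℕ) (A : BipGraph V) : Prop :=
  |(A.L.card : ℝ) - (ℓ : ℝ)| ≤ 0.01 * ℓ ∧ |(A.R.card : ℝ) - (ℓ : ℝ)| ≤ 0.01 * ℓ ∧
  ∀ x ∈ A.verts, (0.9 : ℝ) * ℓ ≤ (A.deg x : ℝ)

/-- the disjoint union of two vertex-disjoint bipartite graphs -/
def disjUnion (A B : BipGraph V) (h : Disjoint A.verts B.verts) : BipGraph V where
  L := A.L ∪ B.L
  R := A.R ∪ B.R
  disj := by
    have h1 : Disjoint A.L B.R := h.mono Finset.subset_union_left Finset.subset_union_right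
    have h2 : Disjoint B.L A.R := h.symm.mono Finset.subset_union_left Finset.subset_union_right
    rw [Finset.disjoint_union_left, Finset.disjoint_union_right, Finset.disjoint_union_right]
    exact ⟨⟨A.disj, h1⟩, ⟨h2, B.disj⟩⟩
  E := A.E ∪ B.E
  E_sub := by
    intro p hp
    rw [Finset.mem_union] at hp
    rw [Finset.mem_product]
    rcases hp with hp | hp
    · have := A.E_sub hp; rw [Finset.mem_product] at this
      exact ⟨Finset.mem_union_left _ this.1, Finset.mem_union_left _ this.2⟩
    · have := B.E_sub hp; rw [Finset.mem_product] at this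
      exact ⟨Finset.mem_union_right _ this.1, Finset.mem_union_right _ this.2⟩

end BipGraph

/-- `estar (2*b) = b^2` and `estar (2*b+1) = b*(b+1)`; i.e. `⌊c/2⌋ * ⌈c/2⌉`. -/
def estar (c : ℕ) : ℕ := (c / 2) * ((c + 1) / 2)


section Aux

open SimpleGraph

/-- Connected components of a disjoint sum of graphs. -/
def sumCCEquiv {α β : Type} (G : SimpleGraph α) (H : SimpleGraph β) :
    (G ⊕g H).ConnectedComponent ≃ G.ConnectedComponent ⊕ H.ConnectedComponent where
  toFun := Quot.lift
    (fun x => match x with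
      | Sum.inl a => Sum.inl (G.connectedComponentMk a)
      | Sum.inr b => Sum.inr (H.connectedComponentMk b))
    (by
      intro x y hr
      obtain ⟨w⟩ := hr
      induction w with
      | nil => rfl
      | cons hadj _ ih =>
        rename_i u z _ _
        refine Eq.trans ?_ ih
        match u, z with
        | Sum.inl a, Sum.inl b =>
          simp only []
          exact congrArg Sum.inl (SimpleGraph.ConnectedComponent.connectedComponentMk_eq_of_adj hadj)
        | Sum.inr a, Sum.inr b =>
          simp only []
          exact congrArg Sum.inr (SimpleGraph.ConnectedComponent.connectedComponentMk_eq_of_adj hadj)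
        | Sum.inl a, Sum.inr b => simp [SimpleGraph.sum] at hadj
        | Sum.inr a, Sum.inl b => simp [SimpleGraph.sum] at hadj)
  invFun := Sum.elim
    (Quot.lift (fun a => (G ⊕g H).connectedComponentMk (Sum.inl a))
      (fun a b hr => SimpleGraph.ConnectedComponent.sound
        (hr.map (SimpleGraph.Embedding.sumInl (H := H)).toHom)))
    (Quot.lift (fun b => (G ⊕g H).connectedComponentMk (Sum.inr b))
      (fun a b hr => SimpleGraph.ConnectedComponent.sound
        (hr.map (SimpleGraph.Embedding.sumInr (G := G)).toHom)))
  left_inv := by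
    refine Quot.ind ?_
    intro x
    cases x <;> rfl
  right_inv := by
    intro s
    cases s with
    | inl c =>
      refine SimpleGraph.ConnectedComponent.ind (fun a => ?_) c
      rfl
    | inr c =>
      refine SimpleGraph.ConnectedComponent.ind (fun b => ?_) c
      rfl

lemma estar_succ (c : ℕ) : estar (c + 1) = estar c + (c + 1) / 2 := by
  unfold estar
  have h2 : (c + 1 + 1) / 2 = c / 2 + 1 := by omega
  rw [h2]
  set x := c / 2
  set y := (c + 1) / 2
  ring

lemma balanced_mul {a b : ℕ} (h : ((a : ℤ) - b).natAbs ≤ 1) : a * b = estar (a + b) := by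
  unfold estar
  have h1 : a = b ∨ a = b + 1 ∨ b = a + 1 := by omega
  rcases h1 with rfl | rfl | rfl
  · have h2 : (a + a) / 2 = a := by omega
    have h3 : (a + a + 1) / 2 = a := by omega
    rw [h2, h3]
  · have h2 : (b + 1 + b) / 2 = b := by omega
    have h3 : (b + 1 + b + 1) / 2 = b + 1 := by omega
    rw [h2, h3]; ring
  · have h2 : (a + (a + 1)) / 2 = a := by omega
    have h3 : (a + (a + 1) + 1) / 2 = a + 1 := by omega
    rw [h2, h3]

namespace BipGraph

variable {V : Type} [DecidableEq V]

lemma mem_verts_of_edge_left {A : BipGraph V} {p : V × V} (hp : p ∈ A.E) : p.1 ∈ A.verts := by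
  have := A.E_sub hp
  rw [Finset.mem_product] at this
  exact Finset.mem_union_left _ this.1

lemma mem_verts_of_edge_right {A : BipGraph V} {p : V × V} (hp : p ∈ A.E) : p.2 ∈ A.verts := by
  have := A.E_sub hp
  rw [Finset.mem_product] at this
  exact Finset.mem_union_right _ this.2

lemma verts_disjUnion (A B : BipGraph V) (h : Disjoint A.verts B.verts) :
    (A.disjUnion B h).verts = A.verts ∪ B.verts := by
  show (A.L ∪ B.L) ∪ (A.R ∪ B.R) = (A.L ∪ A.R) ∪ (B.L ∪ B.R)
  ext x
  simp only [Finset.mem_union]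
  tauto

lemma v_disjUnion (A B : BipGraph V) (h : Disjoint A.verts B.verts) :
    (A.disjUnion B h).v = A.v + B.v := by
  rw [v, verts_disjUnion, Finset.card_union_of_disjoint h]; rfl

lemma e_disjUnion (A B : BipGraph V) (h : Disjoint A.verts B.verts) :
    (A.disjUnion B h).e = A.e + B.e := by
  show (A.E ∪ B.E).card = A.E.card + B.E.card
  rw [Finset.card_union_of_disjoint]
  rw [Finset.disjoint_left]
  intro p hpA hpB
  exact Finset.disjoint_left.mp h (mem_verts_of_edge_left hpA) (mem_verts_of_edge_left hpB)

/-- The vertex set of the disjoint union, as an equiv with the sum. -/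
def vertsEquiv (A B : BipGraph V) (h : Disjoint A.verts B.verts) :
    {x : V // x ∈ (A.disjUnion B h).verts} ≃ {x : V // x ∈ A.verts} ⊕ {x : V // x ∈ B.verts} where
  toFun x := if hx : x.1 ∈ A.verts then Sum.inl ⟨x.1, hx⟩ else
    Sum.inr ⟨x.1, by
      have hx2 : x.1 ∈ A.verts ∪ B.verts := by
        rw [← verts_disjUnion A B h]
        exact x.2
      rcases Finset.mem_union.mp hx2 with h' | h'
      · exact absurd h' hx
      · exact h'⟩
  invFun := Sum.elim
    (fun a => ⟨a.1, by rw [verts_disjUnion]; exact Finset.mem_union_left _ a.2⟩)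
    (fun b => ⟨b.1, by rw [verts_disjUnion]; exact Finset.mem_union_right _ b.2⟩)
  left_inv x := by by_cases hx : x.1 ∈ A.verts <;> simp [hx]
  right_inv s := by
    cases s with
    | inl a => simp [a.2]
    | inr b =>
      have hb : b.1 ∉ A.verts := fun hb' => Finset.disjoint_left.mp h hb' b.2
      simp [hb]

/-- The graph of the disjoint union is isomorphic to the sum graph. -/
def graphIso (A B : BipGraph V) (h : Disjoint A.verts B.verts) :
    (A.disjUnion B h).graph ≃g (A.graph ⊕g B.graph) where
  toEquiv := vertsEquiv A B h
  map_rel_iff' := by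
    intro x y
    have hnA : ∀ z : V, z ∈ B.verts → z ∉ A.verts :=
      fun z hz hz' => Finset.disjoint_left.mp h hz' hz
    have hEA : ∀ p : V × V, p ∈ A.E → p.1 ∈ A.verts ∧ p.2 ∈ A.verts :=
      fun p hp => ⟨mem_verts_of_edge_left hp, mem_verts_of_edge_right hp⟩
    have hEB : ∀ p : V × V, p ∈ B.E → p.1 ∈ B.verts ∧ p.2 ∈ B.verts :=
      fun p hp => ⟨mem_verts_of_edge_left hp, mem_verts_of_edge_right hp⟩
    have hU : ∀ a b : V, (A.disjUnion B h).graph.Adj = fun x y =>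
        ((x.1, y.1) ∈ A.E ∪ B.E ∨ (y.1, x.1) ∈ A.E ∪ B.E) := fun _ _ => rfl
    by_cases hx : x.1 ∈ A.verts <;> by_cases hy : y.1 ∈ A.verts <;>
      simp only [vertsEquiv, Equiv.coe_fn_mk, dif_pos, dif_neg, hx, hy, dite_true, dite_false,
        SimpleGraph.sum_adj] <;>
      · show _ ↔ ((x.1, y.1) ∈ A.E ∪ B.E ∨ (y.1, x.1) ∈ A.E ∪ B.E)
        simp only [Finset.mem_union]
        constructor
        · intro hadj
          first
          | (rcases hadj with h' | h'
             · exact Or.inl (Or.inl h')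
             · exact Or.inr (Or.inl h'))
          | (rcases hadj with h' | h'
             · exact Or.inl (Or.inr h')
             · exact Or.inr (Or.inr h'))
          | exact hadj.elim
        · intro hadj
          rcases hadj with (h' | h') | (h' | h') <;>
            first
            | exact Or.inl h'
            | exact Or.inr h'
            | exact absurd (hEA _ h').1 (by assumption)
            | exact absurd (hEA _ h').2 (by assumption)
            | exact absurd (hEA _ h').1 (hnA _ ((hEB _ (by assumption)).1))
            | exact absurd (hnA _ (hEB _ h').1 hx) (fun _ => trivial)
            | exact absurd hx (fun hc => hc (by exact (hEA _ h').1))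
            | exact (hnA _ (hEB _ h').1 (by assumption)).elim
            | exact (hnA _ (hEB _ h').2 (by assumption)).elim

lemma CC_disjUnion (A B : BipGraph V) (h : Disjoint A.verts B.verts) :
    (A.disjUnion B h).CC = A.CC + B.CC := by
  haveI : Finite A.graph.ConnectedComponent := Quot.finite _
  haveI : Finite B.graph.ConnectedComponent := Quot.finite _
  rw [CC, Nat.card_congr (((graphIso A B h).connectedComponentEquiv).trans
    (sumCCEquiv A.graph B.graph)), Nat.card_sum]
  rfl

lemma CC_le_v (A : BipGraph V) : A.CC ≤ A.v := by
  rw [CC, v, ← Nat.card_eq_finsetCard]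
  exact Nat.card_le_card_of_surjective _ Quot.mk_surjective

lemma k_disjUnion (A B : BipGraph V) (h : Disjoint A.verts B.verts) :
    (A.disjUnion B h).k = A.k + B.k := by
  have h1 := A.CC_le_v
  have h2 := B.CC_le_v
  rw [k, k, k, v_disjUnion, CC_disjUnion]
  omega

lemma CC_eq_one (A : BipGraph V) (hc : A.Complete) (hL : A.L.Nonempty) (hR : A.R.Nonempty) :
    A.CC = 1 := by
  obtain ⟨l, hl⟩ := hL
  obtain ⟨r, hr⟩ := hR
  have hlv : l ∈ A.verts := Finset.mem_union_left _ hl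
  have hrv : r ∈ A.verts := Finset.mem_union_right _ hr
  have hedge : ∀ x ∈ A.L, ∀ y ∈ A.R, (x, y) ∈ A.E := by
    intro x hx y hy
    rw [hc, Finset.mem_product]
    exact ⟨hx, hy⟩
  have hreach : ∀ x : {z : V // z ∈ A.verts}, A.graph.Reachable x ⟨r, hrv⟩ := by
    intro x
    rcases Finset.mem_union.mp x.2 with hx | hx
    · exact (SimpleGraph.Adj.reachable (Or.inl (hedge _ hx _ hr)))
    · have h1 : A.graph.Adj x ⟨l, hlv⟩ := Or.inr (hedge _ hl _ hx)
      have h2 : A.graph.Adj ⟨l, hlv⟩ ⟨r, hrv⟩ := Or.inl (hedge _ hl _ hr)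
      exact h1.reachable.trans h2.reachable
  rw [CC, Nat.card_eq_one_iff_unique]
  constructor
  · constructor
    intro c d
    refine SimpleGraph.ConnectedComponent.ind₂ (fun x y => ?_) c d
    exact SimpleGraph.ConnectedComponent.sound ((hreach x).trans (hreach y).symm)
  · exact ⟨A.graph.connectedComponentMk ⟨r, hrv⟩⟩

lemma CC_null (A : BipGraph V) (hE : A.E = ∅) : A.CC = A.v := by
  have hnoadj : ∀ x y : {z : V // z ∈ A.verts}, ¬ A.graph.Adj x y := by
    intro x y hadj
    rcases hadj with h' | h' <;> simp [hE] at h'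
  rw [CC, v, ← Nat.card_eq_finsetCard]
  apply Nat.card_congr
  refine ⟨Quot.lift id (fun a b hr => ?_), A.graph.connectedComponentMk,
    Quot.ind (fun a => rfl), fun a => rfl⟩
  obtain ⟨w⟩ := hr
  cases w with
  | nil => rfl
  | cons hadj _ => exact absurd hadj (hnoadj _ _)

lemma e_complete_balanced (A : BipGraph V) (hc : A.Complete) (hb : A.Balanced) :
    A.e = estar (A.k + 1) := by
  have hv : A.v = A.L.card + A.R.card := by
    rw [v, verts, Finset.card_union_of_disjoint A.disj]
  by_cases hL : A.L.Nonempty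
  · by_cases hR : A.R.Nonempty
    · have hCC := A.CC_eq_one hc hL hR
      have hvpos : 1 ≤ A.v := by
        have := Finset.card_pos.mpr hL
        omega
      have hk : A.k + 1 = A.v := by
        rw [k, hCC]
        omega
      have he : A.e = A.L.card * A.R.card := by
        rw [e, hc, Finset.card_product]
      rw [he, balanced_mul hb, hk, hv]
    · have hR0 : A.R = ∅ := Finset.not_nonempty_iff_eq_empty.mp hR
      have hE : A.E = ∅ := by
        have := A.E_sub
        rw [hc, hR0, Finset.product_empty]
      have hk : A.k = 0 := by
        rw [k, A.CC_null hE]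
        omega
      rw [e, hE, hk]
      rfl
  · have hL0 : A.L = ∅ := Finset.not_nonempty_iff_eq_empty.mp hL
    have hE : A.E = ∅ := by
      rw [hc, hL0, Finset.empty_product]
    have hk : A.k = 0 := by
      rw [k, A.CC_null hE]
      omega
    rw [e, hE, hk]
    rfl

end BipGraph

end Aux

/-- replacing a pair of complete balanced bipartite graphs with
`k`-values `(k(A), k(B))`, `k(A) ≥ k(B) ≥ 1`, by a pair with `k`-values
`(k(A)+1, k(B)-1)` preserves `k` of the disjoint union and does not decrease
the number of edges. -/
theorem disjUnion_shift (V : Type) [DecidableEq V]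
    (A B Ap Bm : BipGraph V)
    (hAB : Disjoint A.verts B.verts) (hApBm : Disjoint Ap.verts Bm.verts)
    (hAc : A.Complete) (hAb : A.Balanced)
    (hBc : B.Complete) (hBb : B.Balanced)
    (hApc : Ap.Complete) (hApb : Ap.Balanced)
    (hBmc : Bm.Complete) (hBmb : Bm.Balanced)
    (hB1 : 1 ≤ B.k) (hBA : B.k ≤ A.k)
    (hAp : Ap.k = A.k + 1) (hBm : Bm.k + 1 = B.k) :
    (Ap.disjUnion Bm hApBm).k = (A.disjUnion B hAB).k ∧
    (A.disjUnion B hAB).e ≤ (Ap.disjUnion Bm hApBm).e := by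
  constructor
  · rw [BipGraph.k_disjUnion, BipGraph.k_disjUnion]
    omega
  · rw [BipGraph.e_disjUnion, BipGraph.e_disjUnion,
      A.e_complete_balanced hAc hAb, B.e_complete_balanced hBc hBb,
      Ap.e_complete_balanced hApc hApb, Bm.e_complete_balanced hBmc hBmb]
    rw [hAp]
    have h1 : Bm.k + 1 = B.k := hBm
    rw [h1]
    have h2 := estar_succ (A.k + 1)
    have h3 := estar_succ B.k
    omega
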